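/- Let G be a graph and F, H : V(G) → 2^ℕ with F(v) = [0, d_G(v)] \ H(v) for every vertex v, where (G,H) is dense. If |F(v)| ≤ (d_G(v) − 1)/2 for every vertex v, then G admits an H-orientation; equivalently, G has an orientation O with d⁺_O(v) ∉ F(v) for every v. -/

import Mathlib

/-- An orientation of a graph: each edge is assigned a source endpoint. -/
structure GOrientation {V : Type*} (G : SimpleGraph V) where
  src : Sym2 V → V
  mem : ∀ e ∈ G.edgeSet, src e ∈ e

/-- Out-degree of `v` under orientation `O`: number of edges whose source is `v`. -/
noncomputable def outDeg {V : Type*} {G : SimpleGraph V} (O : GOrientation G) (v : V) : ℕ :=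
  Set.ncard {e ∈ G.edgeSet | O.src e = v}

/-- Degree of a vertex. -/
noncomputable def deg {V : Type*} (G : SimpleGraph V) (v : V) : ℕ :=
  (G.neighborSet v).ncard

/-- The pair `(G, H)` is dense: `G` is connected and `i ∉ H v → i+1 ∈ H v`. -/
def DensePair {V : Type*} (G : SimpleGraph V) (H : V → Set ℕ) : Prop :=
  G.Connected ∧ ∀ v : V, ∀ i : ℕ, i ∉ H v → i + 1 ∈ H v

/-- `D⁺_{G,H}(u)`: possible out-degrees of `u` over orientations feasible away from `u`. -/
noncomputable def Dset {V : Type*} (G : SimpleGraph V) (H : V → Set ℕ) (u : V) : Set ℕ :=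
  {d | ∃ O : GOrientation G, (∀ x, x ≠ u → outDeg O x ∈ H x) ∧ outDeg O u = d}

/-- `x` is a cut vertex: `G` is connected but `G - x` is not. -/
def IsCutVertex {V : Type*} (G : SimpleGraph V) (x : V) : Prop :=
  G.Connected ∧ ¬ (G.induce ({x}ᶜ : Set V)).Connected

namespace Stmt10Aux

open SimpleGraph

variable {V : Type*} [Fintype V] {G : SimpleGraph V}

lemma finSym2 (s : Set (Sym2 V)) : s.Finite := by
  have : Finite (Sym2 V) :=
    Finite.of_surjective (fun p : V × V => s(p.1, p.2))
      (fun e => Sym2.ind (fun a b => ⟨(a, b), rfl⟩) e)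
  exact s.toFinite

/-- The set of out-edges of `v`. -/
def outSet (O : GOrientation G) (v : V) : Set (Sym2 V) := {e ∈ G.edgeSet | O.src e = v}

lemma outDeg_def (O : GOrientation G) (v : V) : outDeg O v = (outSet O v).ncard := rfl

/-- The set of in-edges of `v`. -/
def inSet (O : GOrientation G) (v : V) : Set (Sym2 V) :=
  {e ∈ G.edgeSet | v ∈ e ∧ O.src e ≠ v}

lemma ncard_incidenceSet (v : V) : (G.incidenceSet v).ncard = deg G v := by
  classical
  rw [deg, ← Nat.card_coe_set_eq, ← Nat.card_coe_set_eq]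
  exact Nat.card_congr (G.incidenceSetEquivNeighborSet v)

lemma outSet_subset_incidenceSet (O : GOrientation G) (v : V) :
    outSet O v ⊆ G.incidenceSet v := fun e he => ⟨he.1, he.2 ▸ O.mem e he.1⟩

lemma outDeg_le_deg (O : GOrientation G) (v : V) : outDeg O v ≤ deg G v := by
  rw [outDeg_def, ← ncard_incidenceSet]
  exact Set.ncard_le_ncard (outSet_subset_incidenceSet O v) (finSym2 _)

lemma outDeg_add_inDeg (O : GOrientation G) (v : V) :
    outDeg O v + (inSet O v).ncard = deg G v := by
  rw [outDeg_def, ← ncard_incidenceSet (G := G) v,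
    ← Set.ncard_union_eq ?disj (finSym2 _) (finSym2 _)]
  · congr 1
    ext e
    constructor
    · rintro (⟨he, hs⟩ | ⟨he, hv, _⟩)
      · exact ⟨he, hs ▸ O.mem e he⟩
      · exact ⟨he, hv⟩
    · rintro ⟨he, hv⟩
      by_cases h : O.src e = v
      · exact Or.inl ⟨he, h⟩
      · exact Or.inr ⟨he, hv, h⟩
  case disj =>
    rw [Set.disjoint_left]
    rintro e ⟨he, hs⟩ ⟨_, _, hn⟩
    exact hn hs

lemma edge_decomp {e : Sym2 V} (he : e ∈ G.edgeSet) {v : V} (hv : v ∈ e) :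
    ∃ w, w ≠ v ∧ w ∈ e ∧ e = s(v, w) := by
  induction e using Sym2.ind with
  | _ a b =>
    rw [Sym2.mem_iff] at hv
    rw [SimpleGraph.mem_edgeSet] at he
    rcases hv with h | h
    · exact ⟨b, by rw [h]; exact (G.ne_of_adj he).symm, Sym2.mem_mk_right a b, by rw [h]⟩
    · exact ⟨a, by rw [h]; exact G.ne_of_adj he, Sym2.mem_mk_left a b,
        by rw [h]; exact Sym2.eq_swap⟩

open Classical in
/-- Reorient the edge `e₀` so that its source is `w`. -/
noncomputable def flip (O : GOrientation G) (e₀ : Sym2 V) (w : V) (hw : w ∈ e₀) :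
    GOrientation G where
  src e := if e = e₀ then w else O.src e
  mem e he := by
    by_cases h : e = e₀
    · subst h; simpa using hw
    · simpa [h] using O.mem e he

lemma flip_src_self (O : GOrientation G) (e₀ : Sym2 V) (w : V) (hw : w ∈ e₀) :
    (flip O e₀ w hw).src e₀ = w := by simp [flip]

lemma flip_src_of_ne (O : GOrientation G) (e₀ : Sym2 V) (w : V) (hw : w ∈ e₀)
    {e : Sym2 V} (h : e ≠ e₀) : (flip O e₀ w hw).src e = O.src e := by simp [flip, h]

lemma outDeg_flip_of_ne (O : GOrientation G) (e₀ : Sym2 V) (w : V) (hw : w ∈ e₀)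
    {v : V} (hvw : v ≠ w) (hvs : O.src e₀ ≠ v) :
    outDeg (flip O e₀ w hw) v = outDeg O v := by
  rw [outDeg_def, outDeg_def]
  congr 1
  ext e
  simp only [outSet, Set.mem_setOf_eq]
  by_cases h : e = e₀
  · rw [h, flip_src_self]
    constructor
    · rintro ⟨_, rfl⟩; exact absurd rfl hvw
    · rintro ⟨_, rfl⟩; exact absurd rfl hvs
  · rw [flip_src_of_ne O e₀ w hw h]

lemma outDeg_flip_new (O : GOrientation G) (e₀ : Sym2 V) (w : V) (hw : w ∈ e₀)
    (he₀ : e₀ ∈ G.edgeSet) (hsw : O.src e₀ ≠ w) :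
    outDeg (flip O e₀ w hw) w = outDeg O w + 1 := by
  have hset : outSet (flip O e₀ w hw) w = insert e₀ (outSet O w) := by
    ext e
    simp only [outSet, Set.mem_setOf_eq, Set.mem_insert_iff]
    by_cases h : e = e₀
    · rw [h, flip_src_self]
      exact ⟨fun _ => Or.inl rfl, fun _ => ⟨he₀, rfl⟩⟩
    · rw [flip_src_of_ne O e₀ w hw h]
      constructor
      · exact fun hh => Or.inr hh
      · rintro (rfl | hh)
        · exact absurd rfl h
        · exact hh
  have hnm : e₀ ∉ outSet O w := fun hh => hsw hh.2
  rw [outDeg_def, outDeg_def, hset, Set.ncard_insert_of_notMem hnm (finSym2 _)]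

lemma outDeg_flip_old (O : GOrientation G) (e₀ : Sym2 V) (w : V) (hw : w ∈ e₀)
    (he₀ : e₀ ∈ G.edgeSet) {y : V} (hsy : O.src e₀ = y) (hyw : y ≠ w) :
    outDeg O y = outDeg (flip O e₀ w hw) y + 1 := by
  have hset : outSet O y = insert e₀ (outSet (flip O e₀ w hw) y) := by
    ext e
    simp only [outSet, Set.mem_setOf_eq, Set.mem_insert_iff]
    by_cases h : e = e₀
    · rw [h, flip_src_self]
      constructor
      · exact fun _ => Or.inl rfl
      · rintro (h' | ⟨_, hh⟩)
        · exact ⟨he₀, hsy⟩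
        · exact absurd hh.symm hyw
    · rw [flip_src_of_ne O e₀ w hw h]
      constructor
      · exact fun hh => Or.inr hh
      · rintro (rfl | hh)
        · exact absurd rfl h
        · exact hh
  have hnm : e₀ ∉ outSet (flip O e₀ w hw) y := by
    intro hh
    rw [outSet, Set.mem_setOf_eq, flip_src_self] at hh
    exact hyw hh.2.symm
  rw [outDeg_def, outDeg_def, hset, Set.ncard_insert_of_notMem hnm (finSym2 _)]

lemma outDeg_congr {O O' : GOrientation G} (v : V)
    (h : ∀ e ∈ G.edgeSet, v ∈ e → O'.src e = O.src e) : outDeg O' v = outDeg O v := by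
  rw [outDeg_def, outDeg_def]
  congr 1
  ext e
  simp only [outSet, Set.mem_setOf_eq]
  constructor
  · rintro ⟨he, hs⟩
    refine ⟨he, ?_⟩
    rw [← h e he (hs ▸ O'.mem e he)]
    exact hs
  · rintro ⟨he, hs⟩
    refine ⟨he, ?_⟩
    rw [h e he (hs ▸ O.mem e he)]
    exact hs

/-- `O` is a valid partial orientation: good everywhere except possibly at `y`. -/
def Conf (H : V → Set ℕ) (O : GOrientation G) (y : V) : Prop :=
  ∀ v, v ≠ y → outDeg O v ∈ H v

variable {H : V → Set ℕ}

lemma pin (NoOr : ¬∃ O : GOrientation G, ∀ v, outDeg O v ∈ H v)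
    {O : GOrientation G} {y : V} (hO : Conf H O y) : outDeg O y ∉ H y := by
  intro h
  refine NoOr ⟨O, fun v => ?_⟩
  by_cases hv : v = y
  · subst hv; exact h
  · exact hO v hv

/-- Moving the token along one edge. -/
lemma step_conf (hdense : ∀ v i, i ∉ H v → i + 1 ∈ H v)
    (NoOr : ¬∃ O : GOrientation G, ∀ v, outDeg O v ∈ H v)
    {y u : V} (hadj : G.Adj y u) (O : GOrientation G) (hO : Conf H O y) :
    ∃ O' : GOrientation G, Conf H O' u ∧
      ∀ e ∈ G.edgeSet, e ≠ s(y, u) → O'.src e = O.src e := by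
  have he₀ : s(y, u) ∈ G.edgeSet := G.mem_edgeSet.mpr hadj
  have hyu : y ≠ u := hadj.ne
  have hy : y ∈ s(y, u) := Sym2.mem_mk_left y u
  have hu : u ∈ s(y, u) := Sym2.mem_mk_right y u
  have hsrc := O.mem _ he₀
  rw [Sym2.mem_iff] at hsrc
  rcases hsrc with hs | hs
  · -- the edge points out of y; flip it towards u
    refine ⟨flip O s(y, u) u hu, ?_, fun e _ hne => flip_src_of_ne O _ u hu hne⟩
    intro v hv
    by_cases hvy : v = y
    · rw [hvy]
      have heq := outDeg_flip_old O s(y, u) u hu he₀ hs hyu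
      have hpin := pin NoOr hO
      by_contra hmem
      exact hpin (by rw [heq]; exact hdense y _ hmem)
    · rw [outDeg_flip_of_ne O s(y, u) u hu hv (by rw [hs]; exact Ne.symm hvy)]
      exact hO v hvy
  · -- the edge points out of u; flip it towards y
    refine ⟨flip O s(y, u) y hy, ?_, fun e _ hne => flip_src_of_ne O _ y hy hne⟩
    intro v hv
    by_cases hvy : v = y
    · rw [hvy, outDeg_flip_new O s(y, u) y hy he₀ (by rw [hs]; exact Ne.symm hyu)]
      exact hdense y _ (pin NoOr hO)
    · rw [outDeg_flip_of_ne O s(y, u) y hy hvy (by rw [hs]; exact Ne.symm hv)]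
      exact hO v hvy

/-- Moving the token along a walk. -/
lemma walk_conf (hdense : ∀ v i, i ∉ H v → i + 1 ∈ H v)
    (NoOr : ¬∃ O : GOrientation G, ∀ v, outDeg O v ∈ H v) :
    ∀ {y z : V} (p : G.Walk y z) (O : GOrientation G), Conf H O y →
      ∃ O' : GOrientation G, Conf H O' z ∧
        ∀ e ∈ G.edgeSet, e ∉ p.edges → O'.src e = O.src e := by
  intro y z p
  induction p with
  | nil => exact fun O hO => ⟨O, hO, fun _ _ _ => rfl⟩
  | @cons a b c hadj q ih =>
    intro O hO
    obtain ⟨O₁, hO₁, hs₁⟩ := step_conf hdense NoOr hadj O hO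
    obtain ⟨O₂, hO₂, hs₂⟩ := ih O₁ hO₁
    refine ⟨O₂, hO₂, fun e he hne => ?_⟩
    rw [SimpleGraph.Walk.edges_cons, List.mem_cons] at hne
    push_neg at hne
    rw [hs₂ e he hne.2, hs₁ e he hne.1]

lemma not_mem_edge {a b z : V} (p : G.Walk a b) (hz : z ∉ p.support)
    {e : Sym2 V} (he : e ∈ p.edges) : z ∉ e := by
  intro hze
  induction e using Sym2.ind with
  | _ x y =>
    rw [Sym2.mem_iff] at hze
    rcases hze with rfl | rfl
    · exact hz (p.fst_mem_support_of_mem_edges he)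
    · exact hz (p.snd_mem_support_of_mem_edges he)

section Pump

variable (hdense : ∀ v i, i ∉ H v → i + 1 ∈ H v)
  (NoOr : ¬∃ O : GOrientation G, ∀ v, outDeg O v ∈ H v)
  {z : V}
  (hAv : ∀ w t : V, w ≠ z → t ≠ z → ∃ p : G.Walk w t, z ∉ p.support)

include hdense NoOr hAv

lemma pumpDownStep {O : GOrientation G} (hO : Conf H O z) (h2 : 2 ≤ outDeg O z) :
    ∃ O' : GOrientation G, Conf H O' z ∧ outDeg O z = outDeg O' z + 2 := by
  have htwo : 1 < (outSet O z).ncard := by rw [← outDeg_def]; omega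
  obtain ⟨e₁, he₁m, e₂, he₂m, hne⟩ := (Set.one_lt_ncard (finSym2 _)).mp htwo
  obtain ⟨he₁E, hs₁⟩ := he₁m
  obtain ⟨he₂E, hs₂⟩ := he₂m
  have hze₁ : z ∈ e₁ := hs₁ ▸ O.mem _ he₁E
  have hze₂ : z ∈ e₂ := hs₂ ▸ O.mem _ he₂E
  obtain ⟨w, hwz, hwe₁, he₁⟩ := edge_decomp he₁E hze₁
  obtain ⟨t, htz, hte₂, he₂⟩ := edge_decomp he₂E hze₂
  -- flip e₁ towards w
  set O₁ := flip O e₁ w hwe₁ with hO₁def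
  have hd₁ : outDeg O z = outDeg O₁ z + 1 := outDeg_flip_old O e₁ w hwe₁ he₁E hs₁ hwz.symm
  have hO₁ : Conf H O₁ w := by
    intro v hv
    by_cases hvz : v = z
    · rw [hvz]
      have hpin := pin NoOr hO
      by_contra hmem
      exact hpin (by rw [hd₁]; exact hdense z _ hmem)
    · rw [hO₁def, outDeg_flip_of_ne O e₁ w hwe₁ hv (by rw [hs₁]; exact Ne.symm hvz)]
      exact hO v hvz
  -- walk from w to t avoiding z
  obtain ⟨p, hp⟩ := hAv w t hwz htz
  obtain ⟨O₂, hO₂, hsrc₂⟩ := walk_conf hdense NoOr p O₁ hO₁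
  have he₂p : e₂ ∉ p.edges := fun hh => not_mem_edge p hp hh hze₂
  have hsrc₂e₂ : O₂.src e₂ = z := by
    rw [hsrc₂ e₂ he₂E he₂p, hO₁def, flip_src_of_ne O e₁ w hwe₁ (Ne.symm hne), hs₂]
  have hd₂ : outDeg O₂ z = outDeg O₁ z := by
    refine outDeg_congr z (fun e heE hze => ?_)
    exact hsrc₂ e heE (fun hh => not_mem_edge p hp hh hze)
  -- flip e₂ towards t
  set O₃ := flip O₂ e₂ t hte₂ with hO₃def
  have hd₃ : outDeg O₂ z = outDeg O₃ z + 1 :=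
    outDeg_flip_old O₂ e₂ t hte₂ he₂E hsrc₂e₂ htz.symm
  refine ⟨O₃, ?_, by omega⟩
  intro v hv
  by_cases hvt : v = t
  · rw [hvt, hO₃def, outDeg_flip_new O₂ e₂ t hte₂ he₂E (by rw [hsrc₂e₂]; exact htz.symm)]
    exact hdense t _ (pin NoOr hO₂)
  · rw [hO₃def, outDeg_flip_of_ne O₂ e₂ t hte₂ hvt (by rw [hsrc₂e₂]; exact Ne.symm hv)]
    exact hO₂ v hvt

lemma pumpUpStep {O : GOrientation G} (hO : Conf H O z) (h2 : outDeg O z + 2 ≤ deg G z) :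
    ∃ O' : GOrientation G, Conf H O' z ∧ outDeg O' z = outDeg O z + 2 := by
  have hin := outDeg_add_inDeg O z
  have htwo : 1 < (inSet O z).ncard := by omega
  obtain ⟨e₁, he₁m, e₂, he₂m, hne⟩ := (Set.one_lt_ncard (finSym2 _)).mp htwo
  obtain ⟨he₁E, hze₁, hs₁⟩ := he₁m
  obtain ⟨he₂E, hze₂, hs₂⟩ := he₂m
  obtain ⟨w, hwz, hwe₁, he₁⟩ := edge_decomp he₁E hze₁
  obtain ⟨t, htz, hte₂, he₂⟩ := edge_decomp he₂E hze₂
  have hs₁w : O.src e₁ = w := by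
    have := O.mem _ he₁E
    rw [he₁, Sym2.mem_iff] at this
    rcases this with hh | hh
    · exact absurd (by rw [← he₁] at hh; exact hh) hs₁
    · rw [← he₁] at hh; exact hh
  have hs₂t : O.src e₂ = t := by
    have := O.mem _ he₂E
    rw [he₂, Sym2.mem_iff] at this
    rcases this with hh | hh
    · exact absurd (by rw [← he₂] at hh; exact hh) hs₂
    · rw [← he₂] at hh; exact hh
  -- flip e₁ towards z
  set O₁ := flip O e₁ z hze₁ with hO₁def
  have hd₁ : outDeg O₁ z = outDeg O z + 1 := outDeg_flip_new O e₁ z hze₁ he₁E hs₁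
  have hO₁ : Conf H O₁ w := by
    intro v hv
    by_cases hvz : v = z
    · rw [hvz, hd₁]
      exact hdense z _ (pin NoOr hO)
    · rw [hO₁def, outDeg_flip_of_ne O e₁ z hze₁ hvz (by rw [hs₁w]; exact Ne.symm hv)]
      exact hO v hvz
  -- walk from w to t avoiding z
  obtain ⟨p, hp⟩ := hAv w t hwz htz
  obtain ⟨O₂, hO₂, hsrc₂⟩ := walk_conf hdense NoOr p O₁ hO₁
  have he₂p : e₂ ∉ p.edges := fun hh => not_mem_edge p hp hh hze₂
  have hsrc₂e₂ : O₂.src e₂ = t := by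
    rw [hsrc₂ e₂ he₂E he₂p, hO₁def, flip_src_of_ne O e₁ z hze₁ (Ne.symm hne), hs₂t]
  have hd₂ : outDeg O₂ z = outDeg O₁ z := by
    refine outDeg_congr z (fun e heE hze => ?_)
    exact hsrc₂ e heE (fun hh => not_mem_edge p hp hh hze)
  -- flip e₂ towards z
  set O₃ := flip O₂ e₂ z hze₂ with hO₃def
  have hd₃ : outDeg O₃ z = outDeg O₂ z + 1 :=
    outDeg_flip_new O₂ e₂ z hze₂ he₂E (by rw [hsrc₂e₂]; exact htz)
  refine ⟨O₃, ?_, by omega⟩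
  intro v hv
  by_cases hvt : v = t
  · rw [hvt]
    have hd₄ : outDeg O₂ t = outDeg O₃ t + 1 :=
      outDeg_flip_old O₂ e₂ z hze₂ he₂E hsrc₂e₂ htz
    have hpin := pin NoOr hO₂
    by_contra hmem
    exact hpin (by rw [hd₄]; exact hdense t _ hmem)
  · rw [hO₃def, outDeg_flip_of_ne O₂ e₂ z hze₂ hv (by rw [hsrc₂e₂]; exact Ne.symm hvt)]
    exact hO₂ v hvt

lemma pumpDown :
    ∀ (k : ℕ) (O : GOrientation G), Conf H O z → outDeg O z = k →
      ∃ (α : ℕ) (O' : GOrientation G), α ≤ 1 ∧ Conf H O' z ∧ outDeg O' z = α := by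
  intro k
  induction k using Nat.strong_induction_on with
  | _ k ih =>
    intro O hO hk
    by_cases hk1 : k ≤ 1
    · exact ⟨k, O, hk1, hO, hk⟩
    · obtain ⟨O₃, hO₃, heq⟩ := pumpDownStep hdense NoOr hAv hO (by omega)
      exact ih (k - 2) (by omega) O₃ hO₃ (by omega)

lemma pumpUp :
    ∀ (j : ℕ) (O : GOrientation G) (α : ℕ), Conf H O z → outDeg O z = α →
      deg G z ≤ α + j →
      ∃ s : ℕ, (∀ i ≤ s, α + 2 * i ∉ H z ∧ α + 2 * i ≤ deg G z) ∧
        deg G z ≤ α + 2 * s + 1 := by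
  intro j
  induction j using Nat.strong_induction_on with
  | _ j ih =>
    intro O α hO hα hj
    have hpin : α ∉ H z := hα ▸ pin NoOr hO
    have hle : α ≤ deg G z := hα ▸ outDeg_le_deg O z
    by_cases hd : deg G z ≤ α + 1
    · refine ⟨0, fun i hi => ?_, by omega⟩
      have : i = 0 := by omega
      subst this
      simpa using ⟨hpin, hle⟩
    · have hstep : outDeg O z + 2 ≤ deg G z := by omega
      obtain ⟨O₃, hO₃, heq⟩ := pumpUpStep hdense NoOr hAv hO hstep
      have hj2 : 2 ≤ j := by omega
      obtain ⟨s, hpins, hbound⟩ := ih (j - 2) (by omega) O₃ (α + 2) hO₃ (by omega) (by omega)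
      refine ⟨s + 1, fun i hi => ?_, by omega⟩
      by_cases hi0 : i = 0
      · subst hi0; simpa using ⟨hpin, hle⟩
      · have h1 : α + 2 * i = (α + 2) + 2 * (i - 1) := by omega
        have h2 := hpins (i - 1) (by omega)
        rw [h1]
        exact h2

end Pump

/-- A vertex whose removal leaves everything else connected: a vertex of
maximum distance from a fixed vertex. -/
lemma exists_avoid (hconn : G.Connected) {x y₀ : V} (hadj : G.Adj x y₀) :
    ∃ z : V, ∀ w t : V, w ≠ z → t ≠ z → ∃ p : G.Walk w t, z ∉ p.support := by
  classical
  obtain ⟨z, -, hz⟩ := Finset.exists_max_image Finset.univ (G.dist x)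
    ⟨x, Finset.mem_univ x⟩
  have key : ∀ w : V, w ≠ z → ∃ q : G.Walk x w, z ∉ q.support := by
    intro w hw
    obtain ⟨p, hp⟩ := hconn.exists_walk_length_eq_dist x w
    refine ⟨p, fun hzp => ?_⟩
    have h1 : G.dist x z ≤ (p.takeUntil z hzp).length := SimpleGraph.dist_le _
    have h2 : G.dist z w ≤ (p.dropUntil z hzp).length := SimpleGraph.dist_le _
    have h3 : (p.takeUntil z hzp).length + (p.dropUntil z hzp).length = p.length := by
      rw [← SimpleGraph.Walk.length_append, p.take_spec hzp]
    have h4 : 0 < G.dist z w := hconn.pos_dist_of_ne (fun h => hw h.symm)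
    have h5 := hz w (Finset.mem_univ w)
    omega
  refine ⟨z, fun w t hw ht => ?_⟩
  obtain ⟨q₁, hq₁⟩ := key w hw
  obtain ⟨q₂, hq₂⟩ := key t ht
  refine ⟨q₁.reverse.append q₂, ?_⟩
  rw [SimpleGraph.Walk.mem_support_append_iff]
  rintro (hh | hh)
  · rw [SimpleGraph.Walk.support_reverse, List.mem_reverse] at hh
    exact hq₁ hh
  · exact hq₂ hh

lemma sym2_exists_mem (e : Sym2 V) : ∃ v, v ∈ e :=
  Sym2.ind (fun a b => ⟨a, Sym2.mem_mk_left a b⟩) e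

/-- Some orientation always exists. -/
noncomputable def defaultOrientation (G : SimpleGraph V) : GOrientation G where
  src e := (sym2_exists_mem e).choose
  mem e _ := (sym2_exists_mem e).choose_spec

lemma orient_of_allH (hno : ∀ v, {i | i ≤ deg G v} \ H v = ∅) :
    ∃ O : GOrientation G, ∀ v, outDeg O v ∈ H v := by
  refine ⟨defaultOrientation G, fun v => ?_⟩
  by_contra hmem
  have hmem2 : outDeg (defaultOrientation G) v ∈ {i | i ≤ deg G v} \ H v :=
    ⟨outDeg_le_deg _ v, hmem⟩
  rw [hno v] at hmem2
  exact hmem2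

lemma main (G : SimpleGraph V) :
    ∀ (t : ℕ) (H : V → Set ℕ), G.Connected → (∀ v i, i ∉ H v → i + 1 ∈ H v) →
      (∀ v, ((({i | i ≤ deg G v} \ H v).ncard : ℚ)) ≤ ((deg G v : ℚ) - 1) / 2) →
      (∑ v : V, ({i | i ≤ deg G v} \ H v).ncard) ≤ t →
      ∃ O : GOrientation G, ∀ v, outDeg O v ∈ H v := by
  intro t
  induction t with
  | zero =>
    intro H hconn hdense hcard hsum
    refine orient_of_allH (fun v => ?_)
    have hfin : ({i | i ≤ deg G v} \ H v).Finite :=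
      (Set.finite_Iic (deg G v)).subset (fun i hi => hi.1)
    have h0 : ({i | i ≤ deg G v} \ H v).ncard = 0 := by
      have := Finset.sum_eq_zero_iff.mp (Nat.le_zero.mp hsum) v (Finset.mem_univ v)
      exact this
    exact (Set.ncard_eq_zero hfin).mp h0
  | succ t ih =>
    intro H hconn hdense hcard hsum
    classical
    have hfin : ∀ v, ({i | i ≤ deg G v} \ H v).Finite := fun v =>
      (Set.finite_Iic (deg G v)).subset (fun i hi => hi.1)
    by_cases hex : ∃ x, ({i | i ≤ deg G x} \ H x).Nonempty
    · obtain ⟨x, f, hf⟩ := hex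
      by_contra NoOr
      -- enlarge H at x by f, getting a smaller instance
      set H' : V → Set ℕ := Function.update H x (insert f (H x)) with hH'def
      have hH'x : H' x = insert f (H x) := Function.update_self x _ H
      have hH'v : ∀ v, v ≠ x → H' v = H v := fun v hv => Function.update_of_ne hv _ H
      have hF'x : {i | i ≤ deg G x} \ H' x = ({i | i ≤ deg G x} \ H x) \ {f} := by
        rw [hH'x]
        ext i
        simp only [Set.mem_diff, Set.mem_setOf_eq, Set.mem_insert_iff, Set.mem_singleton_iff]
        tauto
      have hF'v : ∀ v, v ≠ x → {i | i ≤ deg G v} \ H' v = {i | i ≤ deg G v} \ H v :=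
        fun v hv => by rw [hH'v v hv]
      have hdense' : ∀ v i, i ∉ H' v → i + 1 ∈ H' v := by
        intro v i hi
        by_cases hv : v = x
        · subst hv
          rw [hH'x] at hi ⊢
          exact Set.mem_insert_of_mem _ (hdense v i (fun hh => hi (Set.mem_insert_of_mem _ hh)))
        · rw [hH'v v hv] at hi ⊢
          exact hdense v i hi
      have hcard' : ∀ v, ((({i | i ≤ deg G v} \ H' v).ncard : ℚ)) ≤ ((deg G v : ℚ) - 1) / 2 := by
        intro v
        by_cases hv : v = x
        · subst hv
          refine le_trans ?_ (hcard v)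
          rw [hF'x]
          exact_mod_cast Set.ncard_le_ncard Set.diff_subset (hfin v)
        · rw [hF'v v hv]
          exact hcard v
      have hsum' : (∑ v : V, ({i | i ≤ deg G v} \ H' v).ncard) ≤ t := by
        have hxcard : ({i | i ≤ deg G x} \ H' x).ncard + 1 =
            ({i | i ≤ deg G x} \ H x).ncard := by
          rw [hF'x]
          exact Set.ncard_diff_singleton_add_one hf (hfin x)
        have hsplit : ∀ (K : V → Set ℕ),
            (∑ v : V, ({i | i ≤ deg G v} \ K v).ncard) =
            (∑ v ∈ Finset.univ.erase x, ({i | i ≤ deg G v} \ K v).ncard) +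
              ({i | i ≤ deg G x} \ K x).ncard := fun K =>
          (Finset.sum_erase_add Finset.univ _ (Finset.mem_univ x)).symm
        have herase : (∑ v ∈ Finset.univ.erase x, ({i | i ≤ deg G v} \ H' v).ncard) =
            (∑ v ∈ Finset.univ.erase x, ({i | i ≤ deg G v} \ H v).ncard) := by
          refine Finset.sum_congr rfl (fun v hv => ?_)
          rw [hF'v v (Finset.ne_of_mem_erase hv)]
        rw [hsplit H', herase]
        rw [hsplit H] at hsum
        omega
      obtain ⟨O₀, hO₀⟩ := ih H' hconn hdense' hcard' hsum'
      have hConf : Conf H O₀ x := fun v hv => (hH'v v hv) ▸ hO₀ v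
      -- x has positive degree
      have hdx : 1 ≤ deg G x := by
        have h0 : (0 : ℚ) ≤ ((deg G x : ℚ) - 1) / 2 :=
          le_trans (by positivity) (hcard x)
        by_contra hh
        have : deg G x = 0 := by omega
        rw [this] at h0
        norm_num at h0
      have hnbr : (G.neighborSet x).Nonempty := by
        rw [← Set.ncard_pos (Set.toFinite _)]
        exact hdx
      obtain ⟨y₀, hy₀⟩ := hnbr
      have hadj : G.Adj x y₀ := hy₀
      obtain ⟨z, hAv⟩ := exists_avoid hconn hadj
      -- walk the token from x to z
      obtain ⟨p⟩ := hconn.preconnected x z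
      obtain ⟨Oz, hOz, -⟩ := walk_conf hdense NoOr p O₀ hConf
      -- pump down
      obtain ⟨α, O', hα1, hO', hα⟩ :=
        pumpDown hdense NoOr hAv (outDeg Oz z) Oz hOz rfl
      -- pump up
      obtain ⟨s, hpins, hbound⟩ :=
        pumpUp hdense NoOr hAv (deg G z) O' α hO' hα (Nat.le_add_left _ _)
      -- count pinned forbidden values
      classical
      set A : Finset ℕ := (Finset.range (s + 1)).image (fun i => α + 2 * i) with hAdef
      have hAcard : A.card = s + 1 := by
        rw [hAdef, Finset.card_image_of_injective _ (fun a b hab => by omega),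
          Finset.card_range]
      have hsub : (A : Set ℕ) ⊆ {i | i ≤ deg G z} \ H z := by
        intro i hi
        rw [Finset.mem_coe, hAdef, Finset.mem_image] at hi
        obtain ⟨j, hj, rfl⟩ := hi
        rw [Finset.mem_range] at hj
        obtain ⟨hnotH, hle⟩ := hpins j (by omega)
        exact ⟨hle, hnotH⟩
      have hcount : s + 1 ≤ ({i | i ≤ deg G z} \ H z).ncard := by
        have := Set.ncard_le_ncard hsub (hfin z)
        rwa [Set.ncard_coe_finset, hAcard] at this
      have h1 : ((s : ℚ) + 1) ≤ ((deg G z : ℚ) - 1) / 2 := by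
        refine le_trans ?_ (hcard z)
        exact_mod_cast hcount
      have h2 : deg G z ≤ 2 * s + 2 := by omega
      have h3 : ((deg G z : ℚ)) ≤ 2 * (s : ℚ) + 2 := by exact_mod_cast h2
      linarith
    · push_neg at hex
      exact orient_of_allH hex

end Stmt10Aux

theorem stmt10 {V : Type*} [Fintype V] (G : SimpleGraph V) (F H : V → Set ℕ)
    (hFH : ∀ v, F v = {i | i ≤ deg G v} \ H v) (hd : DensePair G H)
    (hcard : ∀ v, ((F v).ncard : ℚ) ≤ ((deg G v : ℚ) - 1) / 2) :
    ∃ O : GOrientation G, ∀ v, outDeg O v ∈ H v := by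
  obtain ⟨hconn, hdense⟩ := hd
  exact Stmt10Aux.main G (∑ v : V, ({i | i ≤ deg G v} \ H v).ncard) H hconn hdense
    (fun v => by rw [← hFH v]; exact hcard v) le_rfl
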